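/- Let 𝔉 be a non-empty hereditary formation and H a subgroup of a finite group G. Then H is K-𝔉-subnormal in G if and only if one of the following holds: (i) H = G; (ii) H·G^𝔉 is a proper subgroup of G and H is K-𝔉-subnormal in H·G^𝔉; (iii) H·G^𝔉 = G, the normal closure H^G is a proper subgroup of G, and H is K-𝔉-subnormal in H^G. -/

import Mathlib

/-! Common definitions: chief factors, G-isomorphism of chief factors, chief factor
functions, the class `C(f)`, classes of finite groups, formations, residuals,
relative centralizers, internal direct products, minimal normal subgroups,
(K-)𝔉-subnormality. -/

/-- Conjugate of an element of a normal subgroup, as an element of the subgroup. -/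
def normalConj {G : Type} [Group G] {H : Subgroup G} (hH : H.Normal) (g : G) (x : ↥H) : ↥H :=
  ⟨g * ↑x * g⁻¹, hH.conj_mem ↑x x.2 g⟩

/-- `H/K` is a chief factor of `G`: both are normal in `G`, `K < H`, and no normal
subgroup of `G` lies strictly between them. -/
def IsChiefFactor (G : Type) [Group G] (H K : Subgroup G) : Prop :=
  H.Normal ∧ K.Normal ∧ K < H ∧
    ∀ L : Subgroup G, L.Normal → K < L → L < H → False

/-- The factors `H/K` and `M/N` are `G`-isomorphic (auxiliary version taking normality
proofs): there is a group isomorphism `φ : H/K ≃* M/N` commuting with the conjugation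
action of `G` on both factors. -/
def GIsoAux (G : Type) [Group G] (H K M N : Subgroup G)
    (hH : H.Normal) (hK : K.Normal) (hM : M.Normal) (hN : N.Normal) : Prop :=
  haveI := hK.subgroupOf H
  haveI := hN.subgroupOf M
  ∃ φ : (↥H ⧸ K.subgroupOf H) ≃* (↥M ⧸ N.subgroupOf M),
    ∀ (g : G) (x : ↥H) (y : ↥M),
      φ (QuotientGroup.mk x) = QuotientGroup.mk y →
        φ (QuotientGroup.mk (normalConj hH g x)) = QuotientGroup.mk (normalConj hM g y)

/-- The factors `H/K` and `M/N` are `G`-isomorphic. -/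
def IsGIsomorphicFactors (G : Type) [Group G] (H K M N : Subgroup G) : Prop :=
  ∃ (hH : H.Normal) (hK : K.Normal) (hM : M.Normal) (hN : N.Normal),
    GIsoAux G H K M N hH hK hM hN

/-- The type of functions assigning a Boolean value (`true` = 1, `false` = 0) to each
finite group `G` and pair of subgroups `H`, `K` (thought of as the factor `H/K`). -/
abbrev ChiefFactorFun : Type 1 :=
  ∀ (G : Type) [Group G] [Finite G], Subgroup G → Subgroup G → Bool

/-- `f` is a chief factor function: it is invariant under `G`-isomorphism of chief
factors and compatible with quotients. -/
structure IsChiefFactorFun (f : ChiefFactorFun) : Prop where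
  iso_inv : ∀ (G : Type) [Group G] [Finite G] (H K M N : Subgroup G),
    IsChiefFactor G H K → IsChiefFactor G M N → IsGIsomorphicFactors G H K M N →
      f G H K = f G M N
  quot_inv : ∀ (G : Type) [Group G] [Finite G] (H K N : Subgroup G) [N.Normal],
    IsChiefFactor G H K → N ≤ K →
      f G H K = f (G ⧸ N) (H.map (QuotientGroup.mk' N)) (K.map (QuotientGroup.mk' N))

/-- `G ∈ C(f)`: every chief factor of `G` has value 1 under `f`. -/
def CClass (f : ChiefFactorFun) (G : Type) [Group G] [Finite G] : Prop :=
  ∀ H K : Subgroup G, IsChiefFactor G H K → f G H K = true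

/-- `G/L ∈ C(f)`, for a normal subgroup `L` of `G`. -/
def CClassQuot (f : ChiefFactorFun) (G : Type) [Group G] [Finite G]
    (L : Subgroup G) (hL : L.Normal) : Prop :=
  haveI := hL
  CClass f (G ⧸ L)

open scoped commutatorElement in
/-- The centralizer `C_G(H/K) = {g : G | [g,h] ∈ K for all h ∈ H}` of the factor
`H/K` in `G` (for `K` normal in `G`). -/
def relCentralizer {G : Type} [Group G] (H K : Subgroup G) (hK : K.Normal) : Subgroup G where
  carrier := {g : G | ∀ x ∈ H, ⁅g, x⁆ ∈ K}
  one_mem' := by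
    intro x hx
    have h1 : ⁅(1 : G), x⁆ = 1 := by group
    rw [h1]; exact K.one_mem
  mul_mem' := by
    intro a b ha hb x hx
    have h1 : ⁅a * b, x⁆ = a * ⁅b, x⁆ * a⁻¹ * ⁅a, x⁆ := by group
    rw [h1]
    exact K.mul_mem (hK.conj_mem _ (hb x hx) a) (ha x hx)
  inv_mem' := by
    intro a ha x hx
    have h1 : ⁅a⁻¹, x⁆ = a⁻¹ * ⁅a, x⁆⁻¹ * a⁻¹⁻¹ := by group
    rw [h1]
    exact hK.conj_mem _ (K.inv_mem (ha x hx)) a⁻¹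

/-- A class of finite groups, given as a predicate on finite group types. -/
abbrev GroupClass : Type 1 := ∀ (G : Type) [Group G] [Finite G], Prop

/-- The class `𝔛` is non-empty. -/
def GroupClassNonempty (𝔛 : GroupClass) : Prop :=
  ∃ (G : Type) (g : Group G) (f : Finite G), @𝔛 G g f

/-- `G/L ∈ 𝔛`, for a normal subgroup `L` of `G`. -/
def QuotientIn (𝔛 : GroupClass) (G : Type) [Group G] [Finite G]
    (L : Subgroup G) (hL : L.Normal) : Prop :=
  haveI := hL
  𝔛 (G ⧸ L)

/-- `𝔛` is a formation: a class of finite groups (closed under isomorphism) which is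
closed under taking quotients and under subdirect products. -/
structure IsFormation (𝔛 : GroupClass) : Prop where
  iso_closed : ∀ (G : Type) [Group G] [Finite G] (H : Type) [Group H] [Finite H],
    (G ≃* H) → 𝔛 G → 𝔛 H
  quot_closed : ∀ (G : Type) [Group G] [Finite G] (N : Subgroup G) [N.Normal],
    𝔛 G → 𝔛 (G ⧸ N)
  subdirect_closed : ∀ (G : Type) [Group G] [Finite G] (N M : Subgroup G)
    [N.Normal] [M.Normal], N ⊓ M = ⊥ → 𝔛 (G ⧸ N) → 𝔛 (G ⧸ M) → 𝔛 G

/-- `𝔛` is hereditary: closed under taking subgroups. -/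
def IsHereditary (𝔛 : GroupClass) : Prop :=
  ∀ (G : Type) [Group G] [Finite G], 𝔛 G → ∀ H : Subgroup G, 𝔛 ↥H

/-- `R` is the `𝔛`-residual of `G`: the smallest normal subgroup of `G` whose
quotient lies in `𝔛`. -/
def IsResidual (𝔛 : GroupClass) (G : Type) [Group G] [Finite G] (R : Subgroup G) : Prop :=
  ∃ hR : R.Normal, QuotientIn 𝔛 G R hR ∧
    ∀ (L : Subgroup G) (hL : L.Normal), QuotientIn 𝔛 G L hL → R ≤ L

/-- `A` is the internal direct product of the family of subgroups `B i`: each `B i`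
is a subgroup of `A` normal in `A`, together they generate `A`, and each of them
intersects the subgroup generated by the others trivially. -/
def IsInternalDirectProduct {G : Type} [Group G] (A : Subgroup G)
    {ι : Type} (B : ι → Subgroup G) : Prop :=
  (∀ i, B i ≤ A) ∧ (∀ i, ((B i).subgroupOf A).Normal) ∧ (⨆ i, B i) = A ∧
    ∀ i, B i ⊓ (⨆ (j) (_ : j ≠ i), B j) = ⊥

/-- A non-abelian simple group. -/
def IsNonabelianSimple (S : Type) [Group S] : Prop :=
  IsSimpleGroup S ∧ ∃ x y : S, x * y ≠ y * x

/-- `A` is a minimal normal subgroup of `G`. -/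
def IsMinimalNormal {G : Type} [Group G] (A : Subgroup G) : Prop :=
  A.Normal ∧ A ≠ ⊥ ∧ ∀ B : Subgroup G, B.Normal → B ≤ A → B ≠ ⊥ → B = A

/-- `H` is a subnormal subgroup of `G`. -/
def IsSubnormal (G : Type) [Group G] (H : Subgroup G) : Prop :=
  ∃ (n : ℕ) (c : ℕ → Subgroup G), c 0 = H ∧ c n = ⊤ ∧
    ∀ i < n, c i ≤ c (i + 1) ∧ ((c i).subgroupOf (c (i + 1))).Normal

/-- One step in a K-`𝔉`-subnormal chain: `A ≤ B`, and either `A` is normal in `B` or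
`B / Core_B(A) ∈ 𝔉`. -/
def KFStep (𝔛 : GroupClass) {G : Type} [Group G] [Finite G] (A B : Subgroup G) : Prop :=
  A ≤ B ∧ ((A.subgroupOf B).Normal ∨ 𝔛 (↥B ⧸ (A.subgroupOf B).normalCore))

/-- `H` is a K-`𝔉`-subnormal subgroup of `G`. -/
def IsKFSubnormal (𝔛 : GroupClass) (G : Type) [Group G] [Finite G] (H : Subgroup G) : Prop :=
  ∃ (n : ℕ) (c : ℕ → Subgroup G), c 0 = H ∧ c n = ⊤ ∧
    ∀ i < n, KFStep 𝔛 (c i) (c (i + 1))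

/-- One step in an `𝔉`-subnormal chain (for hereditary `𝔉`): `A < B` and
`B / Core_B(A) ∈ 𝔉`. -/
def FStep (𝔛 : GroupClass) {G : Type} [Group G] [Finite G] (A B : Subgroup G) : Prop :=
  A < B ∧ 𝔛 (↥B ⧸ (A.subgroupOf B).normalCore)

/-- `H` is an `𝔉`-subnormal subgroup of `G` (for hereditary `𝔉`). -/
def IsFSubnormal (𝔛 : GroupClass) (G : Type) [Group G] [Finite G] (H : Subgroup G) : Prop :=
  H = ⊤ ∨ ∃ (n : ℕ) (c : ℕ → Subgroup G), c 0 = H ∧ c n = ⊤ ∧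
    ∀ i < n, FStep 𝔛 (c i) (c (i + 1))



section Stmt17Helpers

-- helper 1
lemma form_surj {𝔉 : GroupClass} (hform : IsFormation 𝔉) {Q : Type} [Group Q] [Finite Q]
    {P : Type} [Group P] [Finite P] (φ : Q →* P) (hs : Function.Surjective φ)
    (hQ : 𝔉 Q) : 𝔉 P :=
  hform.iso_closed _ _ (QuotientGroup.quotientKerEquivOfSurjective φ hs)
    (hform.quot_closed Q φ.ker hQ)

-- helper 2
lemma form_quot_le_ker {𝔉 : GroupClass} (hform : IsFormation 𝔉) {Q : Type} [Group Q] [Finite Q]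
    (N : Subgroup Q) [N.Normal] {P : Type} [Group P] [Finite P]
    (φ : Q →* P) (hs : Function.Surjective φ) (hker : N ≤ φ.ker)
    (hQ : 𝔉 (Q ⧸ N)) : 𝔉 P := by
  refine form_surj hform (QuotientGroup.lift N φ (fun x hx => hker hx)) ?_ hQ
  intro p
  obtain ⟨q, rfl⟩ := hs p
  exact ⟨QuotientGroup.mk q, rfl⟩

-- restriction of a step to a subgroup K
lemma kfstep_restrict {𝔉 : GroupClass} (hform : IsFormation 𝔉) (hhered : IsHereditary 𝔉)
    {G : Type} [Group G] [Finite G] (K A B : Subgroup G)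
    (h : KFStep 𝔉 A B) : KFStep 𝔉 (A.subgroupOf K) (B.subgroupOf K) := by
  obtain ⟨hAB, hstep⟩ := h
  refine ⟨fun x hx => hAB hx, ?_⟩
  set A' := A.subgroupOf K
  set B' := B.subgroupOf K
  rcases hstep with hN | hF
  · left
    constructor
    intro a ha g
    rw [Subgroup.mem_subgroupOf] at ha ⊢
    rw [Subgroup.mem_subgroupOf] at ha ⊢
    have hgB : ((g : ↥K) : G) ∈ B := Subgroup.mem_subgroupOf.mp g.2
    have haB : ((a : ↥K) : G) ∈ B := hAB ha
    have := hN.conj_mem ⟨((a : ↥K) : G), haB⟩ (Subgroup.mem_subgroupOf.mpr ha) ⟨_, hgB⟩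
    rw [Subgroup.mem_subgroupOf] at this
    exact this
  · right
    set N := (A.subgroupOf B).normalCore
    set core' := ((A'.subgroupOf B')).normalCore
    -- map from B' to B
    have memB : ∀ x : ↥B', ((x : ↥K) : G) ∈ B := fun x => Subgroup.mem_subgroupOf.mp x.2
    let ι : ↥B' →* ↥B :=
      { toFun := fun x => ⟨((x : ↥K) : G), memB x⟩
        map_one' := rfl
        map_mul' := fun x y => rfl }
    let φ : ↥B' →* ↥B ⧸ N := (QuotientGroup.mk' N).comp ι
    have hker : φ.ker ≤ core' := by
      refine Subgroup.normal_le_normalCore.mpr ?_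
      intro x hx
      have hx' : ι x ∈ N := (QuotientGroup.eq_one_iff _).mp hx
      have hxA : ((x : ↥K) : G) ∈ A := Subgroup.mem_subgroupOf.mp ((A.subgroupOf B).normalCore_le hx')
      exact Subgroup.mem_subgroupOf.mpr (Subgroup.mem_subgroupOf.mpr hxA)
    have h1 : 𝔉 (↥B' ⧸ φ.ker) :=
      hform.iso_closed _ _ (QuotientGroup.quotientKerEquivRange φ).symm
        (hhered _ hF φ.range)
    exact form_quot_le_ker hform φ.ker (QuotientGroup.mk' core')
      (QuotientGroup.mk'_surjective core')
      (by rw [QuotientGroup.ker_mk']; exact hker) h1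

lemma kf_restrict {𝔉 : GroupClass} (hform : IsFormation 𝔉) (hhered : IsHereditary 𝔉)
    {G : Type} [Group G] [Finite G] {H K : Subgroup G} (hHK : H ≤ K)
    (h : IsKFSubnormal 𝔉 G H) : IsKFSubnormal 𝔉 ↥K (H.subgroupOf K) := by
  obtain ⟨n, c, h0, hn, hstep⟩ := h
  refine ⟨n, fun i => (c i).subgroupOf K, by show (c 0).subgroupOf K = _; rw [h0], by show (c n).subgroupOf K = _; rw [hn, Subgroup.top_subgroupOf], ?_⟩
  intro i hi
  exact kfstep_restrict hform hhered K _ _ (hstep i hi)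

lemma kfstep_map {𝔉 : GroupClass} (hform : IsFormation 𝔉)
    {G : Type} [Group G] [Finite G] {K : Subgroup G} {A B : Subgroup ↥K}
    (h : KFStep 𝔉 A B) : KFStep 𝔉 (A.map K.subtype) (B.map K.subtype) := by
  obtain ⟨hAB, hstep⟩ := h
  refine ⟨Subgroup.map_mono hAB, ?_⟩
  set A₂ := A.map K.subtype with hA₂
  set B₂ := B.map K.subtype with hB₂
  have memB₂ : ∀ x : ↥B, ((x : ↥K) : G) ∈ B₂ := fun x => Subgroup.mem_map_of_mem _ x.2
  let ψ : ↥B →* ↥B₂ :=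
    { toFun := fun x => ⟨((x : ↥K) : G), memB₂ x⟩
      map_one' := rfl
      map_mul' := fun x y => rfl }
  have hψs : Function.Surjective ψ := by
    rintro ⟨x, hx⟩
    obtain ⟨b, hb, rfl⟩ := hx
    exact ⟨⟨b, hb⟩, rfl⟩
  have hmemA : ∀ x : ↥B, x ∈ A.subgroupOf B → ψ x ∈ A₂.subgroupOf B₂ := by
    intro x hx
    exact Subgroup.mem_subgroupOf.mpr (Subgroup.mem_map_of_mem _ (Subgroup.mem_subgroupOf.mp hx))
  rcases hstep with hN | hF
  · left
    constructor
    intro a ha g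
    rw [Subgroup.mem_subgroupOf] at ha ⊢
    obtain ⟨a', ha'A, ha'c⟩ := ha
    obtain ⟨g', hg'B, hg'c⟩ := g.2
    have hc := hN.conj_mem ⟨a', hAB ha'A⟩ (Subgroup.mem_subgroupOf.mpr ha'A) ⟨g', hg'B⟩
    rw [Subgroup.mem_subgroupOf] at hc
    refine ⟨_, hc, ?_⟩
    show ((g' * a' * g'⁻¹ : ↥K) : G) = ((g * a * g⁻¹ : ↥B₂) : G)
    simp only [Subgroup.coe_subtype] at ha'c hg'c
    push_cast
    rw [ha'c, hg'c]
  · right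
    set core := (A.subgroupOf B).normalCore
    set core₂ := ((A₂.subgroupOf B₂)).normalCore
    have hcmn : ((core.map ψ)).Normal := Subgroup.Normal.map inferInstance ψ hψs
    have hcm : core.map ψ ≤ core₂ := by
      haveI := hcmn
      refine Subgroup.normal_le_normalCore.mpr ?_
      rintro _ ⟨x, hx, rfl⟩
      exact hmemA x ((A.subgroupOf B).normalCore_le hx)
    refine form_quot_le_ker hform core ((QuotientGroup.mk' core₂).comp ψ)
      ((QuotientGroup.mk'_surjective core₂).comp hψs) ?_ hF
    intro x hx
    have : ψ x ∈ core₂ := hcm (Subgroup.mem_map_of_mem _ hx)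
    simpa [MonoidHom.mem_ker, QuotientGroup.eq_one_iff] using this

lemma kf_lift {𝔉 : GroupClass} (hform : IsFormation 𝔉)
    {G : Type} [Group G] [Finite G] (K : Subgroup G) {H : Subgroup G} (hHK : H ≤ K)
    (hs : IsKFSubnormal 𝔉 ↥K (H.subgroupOf K)) (hstep : KFStep 𝔉 K ⊤) :
    IsKFSubnormal 𝔉 G H := by
  obtain ⟨n, c, h0, hn, hsteps⟩ := hs
  refine ⟨n + 1, fun i => if i ≤ n then (c i).map K.subtype else ⊤, ?_, ?_, ?_⟩
  · show (if 0 ≤ n then (c 0).map K.subtype else ⊤) = H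
    rw [if_pos (Nat.zero_le n), h0, Subgroup.subgroupOf_map_subtype, inf_of_le_left hHK]
  · show (if n + 1 ≤ n then _ else ⊤) = ⊤
    rw [if_neg (by omega)]
  · intro i hi
    rcases Nat.lt_or_ge i n with hlt | hge
    · show KFStep 𝔉 (if i ≤ n then _ else ⊤) (if i + 1 ≤ n then _ else ⊤)
      rw [if_pos (by omega), if_pos (by omega)]
      exact kfstep_map hform (hsteps i hlt)
    · have hie : i = n := by omega
      subst hie
      show KFStep 𝔉 (if i ≤ i then _ else ⊤) (if i + 1 ≤ i then _ else ⊤)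
      rw [if_pos le_rfl, if_neg (by omega), hn]
      have : (⊤ : Subgroup ↥K).map K.subtype = K := by
        rw [← Subgroup.subgroupOf_self K, Subgroup.subgroupOf_map_subtype, inf_idem]
      rw [this]
      exact hstep

-- final step K → ⊤ when R ≤ K (R the residual)
lemma step_top_of_residual {𝔉 : GroupClass} (hform : IsFormation 𝔉)
    {G : Type} [Group G] [Finite G] {R K : Subgroup G}
    (hR : IsResidual 𝔉 G R) (hRK : R ≤ K) : KFStep 𝔉 K (⊤ : Subgroup G) := by
  obtain ⟨hRn, hGR, _⟩ := hR
  refine ⟨le_top, Or.inr ?_⟩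
  set core := (K.subgroupOf (⊤ : Subgroup G)).normalCore
  -- hom G → ↥⊤ ⧸ core
  let e : G →* ↥(⊤ : Subgroup G) := Subgroup.topEquiv.symm.toMonoidHom
  have hRle : R.subgroupOf (⊤ : Subgroup G) ≤ core := by
    haveI := hRn.subgroupOf (⊤ : Subgroup G)
    exact Subgroup.normal_le_normalCore.mpr
      (fun x hx => Subgroup.mem_subgroupOf.mpr (hRK (Subgroup.mem_subgroupOf.mp hx)))
  haveI := hRn
  refine form_quot_le_ker hform R ((QuotientGroup.mk' core).comp e)
    ((QuotientGroup.mk'_surjective core).comp (MulEquiv.surjective _)) ?_ hGR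
  intro r hr
  have : e r ∈ core := hRle (Subgroup.mem_subgroupOf.mpr hr)
  simpa [MonoidHom.mem_ker, QuotientGroup.eq_one_iff] using this

lemma step_top_of_normal {𝔉 : GroupClass}
    {G : Type} [Group G] [Finite G] {K : Subgroup G} (hK : K.Normal) :
    KFStep 𝔉 K (⊤ : Subgroup G) :=
  ⟨le_top, Or.inl (hK.subgroupOf ⊤)⟩

-- from the 𝔉-condition on the last step, the residual is contained in M
lemma residual_le_of_fstep {𝔉 : GroupClass} (hform : IsFormation 𝔉)
    {G : Type} [Group G] [Finite G] {R M : Subgroup G} (hR : IsResidual 𝔉 G R)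
    (hF : 𝔉 (↥(⊤ : Subgroup G) ⧸ (M.subgroupOf (⊤ : Subgroup G)).normalCore)) : R ≤ M := by
  obtain ⟨hRn, _, hmin⟩ := hR
  set core := (M.subgroupOf (⊤ : Subgroup G)).normalCore with hcore
  set L := core.map (⊤ : Subgroup G).subtype with hL
  have hLn : L.Normal := by
    constructor
    rintro _ ⟨y, hy, rfl⟩ g
    refine ⟨⟨g, trivial⟩ * y * ⟨g, trivial⟩⁻¹,
      (Subgroup.normalCore_normal (M.subgroupOf (⊤:Subgroup G))).conj_mem y hy ⟨g, trivial⟩, rfl⟩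
  have hq : QuotientIn 𝔉 G L hLn := by
    haveI := hLn
    refine form_quot_le_ker hform core ((QuotientGroup.mk' L).comp (⊤ : Subgroup G).subtype)
      ((QuotientGroup.mk'_surjective L).comp (fun g => ⟨⟨g, trivial⟩, rfl⟩)) ?_ hF
    intro x hx
    have hxL : (⊤ : Subgroup G).subtype x ∈ L := Subgroup.mem_map_of_mem (⊤ : Subgroup G).subtype hx
    simpa [MonoidHom.mem_ker, QuotientGroup.eq_one_iff] using hxL
  have hRL : R ≤ L := hmin L hLn hq
  refine hRL.trans ?_
  rintro _ ⟨y, hy, rfl⟩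
  exact Subgroup.mem_subgroupOf.mp ((M.subgroupOf ⊤).normalCore_le hy)

-- normality transfer: (M.subgroupOf ⊤).Normal → M.Normal
lemma normal_of_subgroupOf_top {G : Type} [Group G] {M : Subgroup G}
    (h : (M.subgroupOf (⊤ : Subgroup G)).Normal) : M.Normal := by
  constructor
  intro m hm g
  have := h.conj_mem ⟨m, trivial⟩ (Subgroup.mem_subgroupOf.mpr hm) ⟨g, trivial⟩
  exact Subgroup.mem_subgroupOf.mp this

-- chain monotone
lemma chain_le {𝔉 : GroupClass} {G : Type} [Group G] [Finite G] {n : ℕ} {c : ℕ → Subgroup G}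
    (hstep : ∀ i < n, KFStep 𝔉 (c i) (c (i + 1))) : ∀ i ≤ n, c 0 ≤ c i := by
  intro i
  induction i with
  | zero => intro _; exact le_rfl
  | succ k ih => intro hk; exact (ih (by omega)).trans (hstep k (by omega)).1

end Stmt17Helpers

/-- Let `𝔉` be a non-empty hereditary formation, `G` a finite group
with `𝔉`-residual `R = G^𝔉`, and `H ≤ G`. Then `H` is K-`𝔉`-subnormal in `G` iff
(i) `H = G`; or (ii) `H⬝G^𝔉 < G` and `H` is K-`𝔉`-subnormal in `H⬝G^𝔉`; or
(iii) `H⬝G^𝔉 = G`, `H^G < G` and `H` is K-`𝔉`-subnormal in `H^G`. -/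
theorem stmt17 (𝔉 : GroupClass) (hform : IsFormation 𝔉) (hhered : IsHereditary 𝔉)
    (hne : GroupClassNonempty 𝔉)
    (G : Type) [Group G] [Finite G] (H : Subgroup G)
    (R : Subgroup G) (hR : IsResidual 𝔉 G R) :
    IsKFSubnormal 𝔉 G H ↔
      (H = ⊤ ∨
        (H ⊔ R < ⊤ ∧ IsKFSubnormal 𝔉 ↥(H ⊔ R) (H.subgroupOf (H ⊔ R))) ∨
        (H ⊔ R = ⊤ ∧ Subgroup.normalClosure (H : Set G) < ⊤ ∧
          IsKFSubnormal 𝔉 ↥(Subgroup.normalClosure (H : Set G))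
            (H.subgroupOf (Subgroup.normalClosure (H : Set G))))) := by
  classical
  constructor
  · intro h
    by_cases hH : H = ⊤
    · exact Or.inl hH
    by_cases hHR : H ⊔ R = ⊤
    · obtain ⟨n, c, h0, hn, hsteps⟩ := h
      have hex : ∃ i, c i = ⊤ := ⟨n, hn⟩
      set i := Nat.find hex with hidef
      have hci : c i = ⊤ := Nat.find_spec hex
      have hi0 : i ≠ 0 := by
        intro h'
        rw [h', h0] at hci
        exact hH hci
      have hin : i ≤ n := Nat.find_le hn
      have hcj : c (i - 1) ≠ ⊤ := Nat.find_min hex (by omega)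
      have hstep : KFStep 𝔉 (c (i - 1)) (⊤ : Subgroup G) := by
        have hs := hsteps (i - 1) (by omega)
        rwa [show i - 1 + 1 = i by omega, hci] at hs
      have hHle : H ≤ c (i - 1) := h0 ▸ chain_le hsteps (i - 1) (by omega)
      rcases hstep.2 with hN | hF
      · have hMn : (c (i - 1)).Normal := normal_of_subgroupOf_top hN
        haveI := hMn
        have hcl : Subgroup.normalClosure (H : Set G) ≤ c (i - 1) :=
          Subgroup.normalClosure_le_normal hHle
        refine Or.inr (Or.inr ⟨hHR, lt_of_le_of_lt hcl (lt_top_iff_ne_top.mpr hcj), ?_⟩)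
        exact kf_restrict hform hhered Subgroup.le_normalClosure ⟨n, c, h0, hn, hsteps⟩
      · exfalso
        have hRle : R ≤ c (i - 1) := residual_le_of_fstep hform hR hF
        exact hcj (top_le_iff.mp (hHR ▸ sup_le hHle hRle))
    · exact Or.inr (Or.inl ⟨lt_top_iff_ne_top.mpr hHR,
        kf_restrict hform hhered le_sup_left h⟩)
  · rintro (rfl | ⟨hlt, hsn⟩ | ⟨heq, hlt, hsn⟩)
    · exact ⟨0, fun _ => ⊤, rfl, rfl, fun i hi => absurd hi (by omega)⟩
    · exact kf_lift hform (H ⊔ R) le_sup_left hsn (step_top_of_residual hform hR le_sup_right)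
    · exact kf_lift hform _ Subgroup.le_normalClosure hsn
        (step_top_of_normal Subgroup.normalClosure_normal)
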